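/- Let a locally compact group $G$ act freely and properly on a topological graph $E = (E^0, E^1, s, r)$, let $q : E^1 \to E^1/G$ be the quotient map, and let $K \subseteq E^1/G$ be compact. Then there exists $d \geq 0$ such that for every vertex $v \in E^0$, the set $q^{-1}(K) \cap s^{-1}(v)$ has at most $d$ elements. -/

import Mathlib

/-- Key fact: fibers of a local homeomorphism over a compact set are uniformly bounded. -/
lemma keyfact {X Y : Type*} [TopologicalSpace X] [TopologicalSpace Y]
    (s : X → Y) (hs : IsLocalHomeomorph s) (D : Set X) (hD : IsCompact D) :
    ∃ d : ℕ, ∀ u : Y, (D ∩ s ⁻¹' {u}).Finite ∧ (D ∩ s ⁻¹' {u}).ncard ≤ d := by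
  classical
  -- choose, for each x, an open injectivity neighborhood
  have hU : ∀ x : X, ∃ U : Set X, IsOpen U ∧ x ∈ U ∧ Set.InjOn s U := by
    intro x
    obtain ⟨e, hxe, hfe⟩ := hs x
    refine ⟨e.source, e.open_source, hxe, ?_⟩
    intro a ha b hb hab
    exact e.injOn ha hb (by rw [← hfe] at *; exact hab)
  choose U hUopen hUmem hUinj using hU
  obtain ⟨t, ht⟩ := hD.elim_finite_subcover U hUopen (fun x hx => Set.mem_iUnion.2 ⟨x, hUmem x⟩)
  refine ⟨t.card, fun u => ?_⟩
  have hmem : ∀ e : (D ∩ s ⁻¹' {u} : Set X), ∃ i : t, (e : X) ∈ U i := by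
    rintro ⟨e, heD, -⟩
    obtain ⟨i, hit, hei⟩ := Set.mem_iUnion₂.1 (ht heD)
    exact ⟨⟨i, hit⟩, hei⟩
  choose f hf using hmem
  have hinj : Function.Injective f := by
    intro a b hab
    have ha : (a : X) ∈ U (f a) := hf a
    have hb : (b : X) ∈ U (f a) := hab ▸ hf b
    have hsa : s (a : X) = u := a.2.2
    have hsb : s (b : X) = u := b.2.2
    exact Subtype.ext (hUinj (f a) ha hb (by rw [hsa, hsb]))
  have hfin : (D ∩ s ⁻¹' {u}).Finite := by
    rw [← Set.finite_coe_iff]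
    exact Finite.of_injective f hinj
  refine ⟨hfin, ?_⟩
  have := Nat.card_le_card_of_injective f hinj
  rwa [Nat.card_coe_set_eq, Nat.card_eq_finsetCard] at this

/-- If a locally compact group `G` acts freely and properly on a topological
graph `E = (E⁰, E¹, s, r)`, `q : E¹ → E¹/G` is the quotient map and `K ⊆ E¹/G` is compact,
then there is a `d ≥ 0` such that for every vertex `v ∈ E⁰` the set `q⁻¹(K) ∩ s⁻¹(v)` is
finite with at most `d` elements. -/
theorem stmt6 {G E0 E1 : Type*} [Group G] [TopologicalSpace G]
    [T2Space G] [LocallyCompactSpace G] [IsTopologicalGroup G]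
    [TopologicalSpace E0] [TopologicalSpace E1]
    [T2Space E0] [T2Space E1] [LocallyCompactSpace E0] [LocallyCompactSpace E1]
    [MulAction G E0] [MulAction G E1]
    (hc0 : Continuous fun p : G × E0 => p.1 • p.2)
    (hc1 : Continuous fun p : G × E1 => p.1 • p.2)
    (hfree0 : ∀ (g : G) (v : E0), g • v = v → g = 1)
    (hfree1 : ∀ (g : G) (e : E1), g • e = e → g = 1)
    (hprop0 : IsProperMap fun gp : G × E0 => (gp.1 • gp.2, gp.2))
    (hprop1 : IsProperMap fun gp : G × E1 => (gp.1 • gp.2, gp.2))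
    (s r : E1 → E0) (hs : IsLocalHomeomorph s) (hr : Continuous r)
    (hseq : ∀ (g : G) (e : E1), s (g • e) = g • s e)
    (hreq : ∀ (g : G) (e : E1), r (g • e) = g • r e)
    (K : Set (Quotient (MulAction.orbitRel G E1))) (hK : IsCompact K) :
    ∃ d : ℕ, ∀ v : E0,
      ((Quotient.mk (MulAction.orbitRel G E1) ⁻¹' K) ∩ s ⁻¹' {v}).Finite ∧
      ((Quotient.mk (MulAction.orbitRel G E1) ⁻¹' K) ∩ s ⁻¹' {v}).ncard ≤ d := by
  classical
  haveI : ContinuousSMul G E1 := ⟨hc1⟩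
  set q : E1 → Quotient (MulAction.orbitRel G E1) :=
    Quotient.mk (MulAction.orbitRel G E1) with hq
  have hqopen : IsOpenMap q := MulAction.isOpenQuotientMap_quotientMk.isOpenMap
  -- find a compact C ⊆ E1 with K ⊆ q '' C
  have : ∃ C : Set E1, IsCompact C ∧ K ⊆ q '' C := by
    have hcov : ∀ k ∈ K, ∃ N : Set E1, IsCompact N ∧ k ∈ q '' interior N := by
      intro k _
      obtain ⟨x, hx⟩ := Quotient.exists_rep k
      obtain ⟨N, hNc, hNnhds⟩ := exists_compact_mem_nhds x
      exact ⟨N, hNc, ⟨x, mem_interior_iff_mem_nhds.2 hNnhds, hx⟩⟩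
    choose N hNc hNk using hcov
    obtain ⟨t, ht⟩ := hK.elim_finite_subcover
      (fun k : K => q '' interior (N k.1 k.2))
      (fun k => hqopen _ isOpen_interior)
      (fun k hk => Set.mem_iUnion.2 ⟨⟨k, hk⟩, hNk k hk⟩)
    refine ⟨⋃ k ∈ t, N k.1 k.2, t.isCompact_biUnion (fun k _ => hNc k.1 k.2), ?_⟩
    intro k hk
    obtain ⟨i, hit, hi⟩ := Set.mem_iUnion₂.1 (ht hk)
    obtain ⟨x, hx, hxk⟩ := hi
    exact ⟨x, Set.mem_biUnion hit (interior_subset hx), hxk⟩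
  obtain ⟨C, hC, hKC⟩ := this
  set L : Set E0 := s '' C with hL
  have hLc : IsCompact L := hC.image hs.continuous
  -- W = {g | ∃ x ∈ L, g • x ∈ L} is contained in a compact set
  set P : Set (G × E0) := (fun gp : G × E0 => (gp.1 • gp.2, gp.2)) ⁻¹' (L ×ˢ L) with hP
  have hPc : IsCompact P := hprop0.isCompact_preimage (hLc.prod hLc)
  set W : Set G := Prod.fst '' P with hW
  have hWc : IsCompact W := hPc.image continuous_fst
  -- D = W • C is compact
  set D : Set E1 := (fun p : G × E1 => p.1 • p.2) '' (W ×ˢ C) with hD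
  have hDc : IsCompact D := (hWc.prod hC).image hc1
  obtain ⟨d, hd⟩ := keyfact s hs D hDc
  refine ⟨d, fun v => ?_⟩
  set F : Set E1 := (q ⁻¹' K) ∩ s ⁻¹' {v} with hF
  rcases Set.eq_empty_or_nonempty F with hFe | ⟨e0, he0⟩
  · rw [hFe]; simp
  -- every element of q⁻¹(K) is carried into C by some group element
  have hcarry : ∀ e ∈ q ⁻¹' K, ∃ g : G, g • e ∈ C := by
    intro e he
    obtain ⟨c, hc, hce⟩ := hKC he
    have : MulAction.orbitRel G E1 c e := Quotient.exact hce
    obtain ⟨g, hg⟩ := this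
    refine ⟨g, ?_⟩
    rw [show g • e = c from hg]
    exact hc
  obtain ⟨g0, hg0⟩ := hcarry e0 he0.1
  have he0v : s e0 = v := he0.2
  -- claim : g0 • F ⊆ D ∩ s⁻¹' {g0 • v}
  have hclaim : ∀ e ∈ F, g0 • e ∈ D ∩ s ⁻¹' {g0 • v} := by
    intro e he
    obtain ⟨g, hg⟩ := hcarry e he.1
    have hev : s e = v := he.2
    have hgv : g • v ∈ L := ⟨g • e, hg, by rw [hseq, hev]⟩
    have hg0v : g0 • v ∈ L := ⟨g0 • e0, hg0, by rw [hseq, he0v]⟩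
    have hWmem : g0 * g⁻¹ ∈ W := by
      refine ⟨(g0 * g⁻¹, g • v), ?_, rfl⟩
      simp only [hP, Set.mem_preimage, Set.mem_prod]
      constructor
      · rw [smul_smul]; simpa using hg0v
      · exact hgv
    constructor
    · refine ⟨(g0 * g⁻¹, g • e), Set.mk_mem_prod hWmem hg, ?_⟩
      simp [smul_smul]
    · simp [hseq, hev]
  have hsub : (g0 • ·) '' F ⊆ D ∩ s ⁻¹' {g0 • v} := by
    rintro _ ⟨e, he, rfl⟩
    exact hclaim e he
  have hinj : Function.Injective (g0 • · : E1 → E1) := MulAction.injective g0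
  obtain ⟨hfin, hcard⟩ := hd (g0 • v)
  constructor
  · have : ((g0 • ·) '' F).Finite := hfin.subset hsub
    exact (Set.Finite.of_finite_image this hinj.injOn)
  · calc F.ncard = ((g0 • ·) '' F).ncard := (Set.ncard_image_of_injective F hinj).symm
      _ ≤ (D ∩ s ⁻¹' {g0 • v}).ncard := Set.ncard_le_ncard hsub hfin
      _ ≤ d := hcard
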